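/- Let p be a prime number, let E⁺ be a valuation ring in which p is nonzero, and let M be an E⁺-module. If M is p-torsionfree, then the quotient M/pM is a flat module over the quotient ring E⁺/pE⁺. -/

import Mathlib

theorem aux_exists_dvd_all {E : Type*} [CommRing E] [IsDomain E] [ValuationRing E]
    {ι : Type*} [Fintype ι] [Nonempty ι] (f : ι → E) : ∃ k, ∀ i, f k ∣ f i := by
  have key : ∀ s : Finset ι, s.Nonempty → ∃ k ∈ s, ∀ i ∈ s, f k ∣ f i := by
    intro s hs
    induction hs using Finset.Nonempty.cons_induction with
    | singleton a =>
        exact ⟨a, Finset.mem_singleton_self a, fun i hi => by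
          rw [Finset.mem_singleton.mp hi]⟩
    | cons a s ha hs ih =>
        obtain ⟨k, hk, hdvd⟩ := ih
        rcases ValuationRing.dvd_total (f a) (f k) with h | h
        · refine ⟨a, Finset.mem_cons_self a s, fun i hi => ?_⟩
          rcases Finset.mem_cons.mp hi with rfl | hi
          · exact dvd_rfl
          · exact h.trans (hdvd i hi)
        · refine ⟨k, Finset.mem_cons_of_mem hk, fun i hi => ?_⟩
          rcases Finset.mem_cons.mp hi with rfl | hi
          · exact h
          · exact hdvd i hi
  obtain ⟨k, -, hk⟩ := key Finset.univ Finset.univ_nonempty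
  exact ⟨k, fun i => hk i (Finset.mem_univ i)⟩

theorem aux_trivRel_of_fintype {R : Type*} [CommRing R] {N : Type*} [AddCommGroup N] [Module R N]
    {ι : Type*} [Fintype ι] {f : ι → R} {x : ι → N} {κ : Type*} [Fintype κ]
    (a : ι → κ → R) (y : κ → N) (h1 : ∀ i, x i = ∑ j, a i j • y j)
    (h2 : ∀ j, ∑ i, f i * a i j = 0) : Module.IsTrivialRelation f x := by
  let e := Fintype.equivFin κ
  refine ⟨Fintype.card κ, fun i j => a i (e.symm j), fun j => y (e.symm j), fun i => ?_,
    fun j => h2 _⟩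
  rw [h1 i]
  exact (e.symm.sum_comp (fun j => a i j • y j)).symm

/-- **Lemma 4.7**: if `E` is a valuation ring in which `p` is nonzero and `M` is a
`p`-torsionfree `E`-module, then `M/pM` is a flat `E/pE`-module. -/
theorem mod_p_flat_of_p_torsionfree
    (p : ℕ) (hp : p.Prime) (E : Type) [CommRing E] [IsDomain E] [ValuationRing E]
    (hpne : (p : E) ≠ 0)
    (M : Type) [AddCommGroup M] [Module E M]
    (htf : Function.Injective fun m : M => (p : E) • m) :
    Module.Flat (E ⧸ Ideal.span {(p : E)})
      (M ⧸ ((Ideal.span {(p : E)}) • ⊤ : Submodule E M)) := by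
  classical
  set I : Ideal E := Ideal.span {(p : E)} with hI
  set P : Submodule E M := I • ⊤ with hP
  rw [Module.Flat.iff_forall_isTrivialRelation]
  intro n fbar xbar hrel
  revert fbar xbar hrel
  suffices H : ∀ (ι : Type) [Fintype ι] (fbar : ι → E ⧸ I) (xbar : ι → M ⧸ P),
      ∑ i, fbar i • xbar i = 0 → ∃ (κ : Type) (_ : Fintype κ) (a : ι → κ → E ⧸ I)
        (y : κ → M ⧸ P), (∀ i, xbar i = ∑ j, a i j • y j) ∧ ∀ j, ∑ i, fbar i * a i j = 0 by
    intro fbar xbar hrel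
    obtain ⟨κ, _, a, y, h1, h2⟩ := H (Fin n) fbar xbar hrel
    exact aux_trivRel_of_fintype a y h1 h2
  intro ι _ fbar xbar hrel
  cases isEmpty_or_nonempty ι with
  | inl h =>
      exact ⟨ι, inferInstance, fun i _ => 0, fun _ => 0,
        fun i => isEmptyElim i, fun j => isEmptyElim j⟩
  | inr h =>
  obtain ⟨f, hfl⟩ : ∃ f : ι → E, ∀ i, Ideal.Quotient.mk I (f i) = fbar i := by
    choose f hf using fun i => Ideal.Quotient.mk_surjective (I := I) (fbar i)
    exact ⟨f, hf⟩
  obtain ⟨x, hxl⟩ : ∃ x : ι → M, ∀ i, (Submodule.Quotient.mk (x i) : M ⧸ P) = xbar i := by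
    choose x hx using fun i => Submodule.Quotient.mk_surjective P (xbar i)
    exact ⟨x, hx⟩
  obtain ⟨k, hk⟩ := aux_exists_dvd_all f
  by_cases hpk : (p : E) ∣ f k
  · -- all fbar are zero; trivial factorization with identity matrix
    have hf0 : ∀ i, fbar i = 0 := fun i => by
      rw [← hfl i, Ideal.Quotient.eq_zero_iff_mem, hI, Ideal.mem_span_singleton]
      exact hpk.trans (hk i)
    refine ⟨ι, inferInstance, fun i j => if i = j then 1 else 0, xbar,
      fun i => ?_, fun j => by simp [hf0]⟩
    simp [ite_smul]
  · have hkp : f k ∣ (p : E) :=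
      (ValuationRing.dvd_total (f k) ((p : ℕ) : E)).resolve_right hpk
    obtain ⟨q, hq⟩ := hkp
    have hfk0 : f k ≠ 0 := fun h0 => hpk (h0 ▸ dvd_zero _)
    choose g hg using hk
    have hgk : g k = 1 := by
      have := hg k
      nth_rewrite 1 [← mul_one (f k)] at this
      exact (mul_left_cancel₀ hfk0 this).symm
    -- the relation lives in P
    have h1 : (Submodule.mkQ P) (∑ i, f i • x i) = 0 := by
      rw [map_sum, ← hrel]
      exact Finset.sum_congr rfl fun i _ => by
        rw [← hfl i, ← hxl i]; rfl
    rw [Submodule.mkQ_apply, Submodule.Quotient.mk_eq_zero] at h1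
    obtain ⟨m, hm⟩ : ∃ m : M, (p : E) • m = ∑ i, f i • x i := by
      refine Submodule.smul_induction_on h1 ?_ ?_
      · intro r hr n _
        rw [hI, Ideal.mem_span_singleton] at hr
        obtain ⟨c, rfl⟩ := hr
        exact ⟨c • n, smul_smul _ _ _⟩
      · rintro _ _ ⟨m₁, rfl⟩ ⟨m₂, rfl⟩
        exact ⟨m₁ + m₂, by rw [smul_add]⟩
    -- key identity in M: ∑ g i • x i = q • m
    have h3 : f k • (∑ i, g i • x i) = (p : E) • m := by
      rw [Finset.smul_sum, hm]
      exact Finset.sum_congr rfl fun i _ => by rw [smul_smul, ← hg i]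
    have hz : (∑ i, g i • x i) = q • m := by
      have h4 : (p : E) • ((∑ i, g i • x i) - q • m) = 0 := by
        have : f k • ((∑ i, g i • x i) - q • m) = 0 := by
          rw [smul_sub, h3, smul_smul, ← hq]
          simp
        calc (p : E) • ((∑ i, g i • x i) - q • m)
            = q • (f k • ((∑ i, g i • x i) - q • m)) := by
              rw [smul_smul, mul_comm q (f k), ← hq]
          _ = 0 := by rw [this, smul_zero]
      have := htf (a₁ := (∑ i, g i • x i) - q • m) (a₂ := 0) (by simpa using h4)
      exact sub_eq_zero.mp this
    -- push the key identity to the quotient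
    have hzbar : ∑ i, (Ideal.Quotient.mk I (g i)) • xbar i
        = (Ideal.Quotient.mk I q) • (Submodule.Quotient.mk m : M ⧸ P) := by
      calc ∑ i, (Ideal.Quotient.mk I (g i)) • xbar i
          = Submodule.mkQ P (∑ i, g i • x i) := by
            rw [map_sum]
            exact (Finset.sum_congr rfl fun i _ => by rw [← hxl i]; rfl).symm
        _ = Submodule.mkQ P (q • m) := by rw [hz]
        _ = _ := rfl
    refine ⟨Option ι, inferInstance,
      (fun i j => Option.casesOn j (if i = k then Ideal.Quotient.mk I q else 0)
        (fun j0 => if j0 = k then 0 else if i = j0 then 1 else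
          if i = k then -(Ideal.Quotient.mk I (g j0)) else 0)),
      (fun j => Option.casesOn j ((Submodule.Quotient.mk m : M ⧸ P)) (fun j0 => xbar j0)),
      fun i => ?_, fun j => ?_⟩
    · -- first condition
      rw [Fintype.sum_option]
      by_cases hik : i = k
      · have e1 : ∀ j0 : ι,
            (if j0 = k then 0 else if i = j0 then 1 else
              if i = k then -(Ideal.Quotient.mk I (g j0)) else 0) • xbar j0
            = (if j0 = k then 0 else -((Ideal.Quotient.mk I (g j0)) • xbar j0)) := by
          intro j0
          by_cases hj0 : j0 = k
          · simp [hj0]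
          · have hij0 : i ≠ j0 := fun hh => hj0 (hh ▸ hik)
            have hkj0 : k ≠ j0 := fun hh => hj0 hh.symm
            simp [hj0, hij0, hik, hkj0, neg_smul]
        rw [Finset.sum_congr rfl fun j0 _ => e1 j0]
        have e2 : ∑ j0 : ι, (if j0 = k then (0 : M ⧸ P)
              else -((Ideal.Quotient.mk I (g j0)) • xbar j0))
            = -(∑ j0 : ι, (Ideal.Quotient.mk I (g j0)) • xbar j0)
              + (Ideal.Quotient.mk I (g k)) • xbar k := by
          rw [← Finset.add_sum_erase _ _ (Finset.mem_univ k)]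
          rw [if_pos rfl, zero_add]
          rw [Finset.sum_congr rfl fun j0 hj0 => if_neg (Finset.ne_of_mem_erase hj0)]
          rw [← Finset.sum_neg_distrib]
          rw [Finset.sum_erase_eq_sub (Finset.mem_univ k)]
          abel
        rw [e2, hzbar, hgk, hik]
        simp
      · have e1 : ∀ j0 : ι,
            (if j0 = k then 0 else if i = j0 then 1 else
              if i = k then -(Ideal.Quotient.mk I (g j0)) else 0) • xbar j0
            = (if i = j0 then xbar j0 else 0) := by
          intro j0
          by_cases hj0 : j0 = k
          · have : i ≠ j0 := fun hh => hik (hh.trans hj0)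
            simp [hj0, this, hik]
          · by_cases hij0 : i = j0
            · simp [hj0, hij0]
            · simp [hj0, hij0, hik]
        rw [Finset.sum_congr rfl fun j0 _ => e1 j0]
        simp [hik]
    · -- second condition
      cases j with
      | none =>
          have e1 : ∀ i : ι, fbar i * (if i = k then Ideal.Quotient.mk I q else 0)
              = (if i = k then fbar k * Ideal.Quotient.mk I q else 0) := by
            intro i
            by_cases hik : i = k <;> simp [hik]
          rw [Finset.sum_congr rfl fun i _ => e1 i, Finset.sum_ite_eq' Finset.univ k]
          rw [if_pos (Finset.mem_univ k), ← hfl k, ← map_mul, ← hq,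
            Ideal.Quotient.eq_zero_iff_mem, hI]
          exact Ideal.mem_span_singleton_self _
      | some j0 =>
          by_cases hj0 : j0 = k
          · simp [hj0]
          · have e1 : ∀ i : ι, fbar i * (if j0 = k then 0 else if i = j0 then 1 else
                if i = k then -(Ideal.Quotient.mk I (g j0)) else 0)
                = (if i = j0 then fbar j0 else 0)
                  + (if i = k then fbar k * (-(Ideal.Quotient.mk I (g j0))) else 0) := by
              intro i
              by_cases hij0 : i = j0
              · subst hij0
                have hik : i ≠ k := hj0
                simp [hj0, hik]
              · by_cases hik : i = k
                · subst hik
                  simp [hj0, hij0]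
                · simp [hj0, hij0, hik]
            rw [Finset.sum_congr rfl fun i _ => e1 i, Finset.sum_add_distrib,
              Finset.sum_ite_eq' Finset.univ j0, Finset.sum_ite_eq' Finset.univ k,
              if_pos (Finset.mem_univ j0), if_pos (Finset.mem_univ k),
              ← hfl j0, ← hfl k, ← map_neg, ← map_mul, ← map_add,
              Ideal.Quotient.eq_zero_iff_mem, hI]
            have : f j0 + f k * -g j0 = 0 := by rw [hg j0]; ring
            rw [this]
            exact Ideal.zero_mem _
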